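/- For α, β > -1, n ≥ 1, x ∈ [0,1], nonnegative integers i, j, and f ∈ C[0,1]: B_n^{α,β}(t^i (1-t)^j f(t); x) = [(nx+α+1)^{(i)} · (n(1-x)+β+1)^{(j)} / (n+α+β+2)^{(i+j)}] · B_n^{α+i,β+j}(f; x), where a^{(r)} = a(a+1)···(a+r-1) denotes the rising factorial. -/

import Mathlib

open MeasureTheory intervalIntegral Filter

/-- The Beta operator with Jacobi weights: `B_n^{α,β}(f;x)`. -/
noncomputable def Bop (n α β : ℝ) (f : ℝ → ℝ) (x : ℝ) : ℝ :=
  (∫ t in (0:ℝ)..1, t ^ (n * x + α) * (1 - t) ^ (n - n * x + β) * f t) /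
  (∫ t in (0:ℝ)..1, t ^ (n * x + α) * (1 - t) ^ (n - n * x + β))

/-- The `m`-th central moment `T_{n,m}^{α,β}(x)`. -/
noncomputable def T (n α β : ℝ) (m : ℕ) (x : ℝ) : ℝ :=
  Bop n α β (fun t => (t - x) ^ m) x
lemma betaR {a b : ℝ} (ha : 0 < a) (hb : 0 < b) :
    (∫ t in (0:ℝ)..1, t ^ (a - 1) * (1 - t) ^ (b - 1)) =
      Real.Gamma a * Real.Gamma b / Real.Gamma (a + b) := by
  have key : Complex.Gamma a * Complex.Gamma b =
      Complex.Gamma (a + b) * Complex.betaIntegral a b :=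
    Complex.Gamma_mul_Gamma_eq_betaIntegral (by simpa using ha) (by simpa using hb)
  have hbeta : Complex.betaIntegral a b =
      ((∫ t in (0:ℝ)..1, t ^ (a - 1) * (1 - t) ^ (b - 1) : ℝ) : ℂ) := by
    rw [Complex.betaIntegral, ← intervalIntegral.integral_ofReal]
    refine intervalIntegral.integral_congr fun t ht => ?_
    rw [Set.uIcc_of_le (by norm_num : (0:ℝ) ≤ 1)] at ht
    rw [Complex.ofReal_mul, Complex.ofReal_cpow ht.1,
      Complex.ofReal_cpow (show (0:ℝ) ≤ 1 - t by linarith [ht.2])]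
    push_cast
    ring_nf
  rw [hbeta] at key
  have hG : Real.Gamma (a + b) ≠ 0 := (Real.Gamma_pos_of_pos (by linarith)).ne'
  have key2 : Real.Gamma a * Real.Gamma b =
      Real.Gamma (a + b) * ∫ t in (0:ℝ)..1, t ^ (a - 1) * (1 - t) ^ (b - 1) := by
    rw [Complex.Gamma_ofReal, Complex.Gamma_ofReal, ← Complex.ofReal_add, Complex.Gamma_ofReal,
      ← Complex.ofReal_mul, ← Complex.ofReal_mul] at key
    exact_mod_cast key
  rw [eq_div_iff hG, key2]
  ring

lemma gammaAsc {a : ℝ} (ha : 0 < a) (m : ℕ) :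
    Real.Gamma (a + m) = Real.Gamma a * (ascPochhammer ℝ m).eval a := by
  induction m with
  | zero => simp
  | succ k ih =>
    have hk : (0:ℝ) < a + k := by positivity
    rw [ascPochhammer_succ_right]
    push_cast
    rw [show a + ((k:ℝ) + 1) = (a + k) + 1 by ring, Real.Gamma_add_one hk.ne', ih]
    simp only [Polynomial.eval_mul, Polynomial.eval_add, Polynomial.eval_X,
      Polynomial.eval_natCast]
    try ring

lemma ascPos {c : ℝ} (hc : 0 < c) (m : ℕ) : 0 < (ascPochhammer ℝ m).eval c := by
  have h1 := gammaAsc hc m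
  have h2 := Real.Gamma_pos_of_pos (show (0:ℝ) < c + m by positivity)
  have hGc := Real.Gamma_pos_of_pos hc
  nlinarith

theorem beta_op_weight_shift (α β : ℝ) (hα : α > -1) (hβ : β > -1)
    (n : ℕ) (hn : 1 ≤ n) (x : ℝ) (hx : x ∈ Set.Icc (0:ℝ) 1) (i j : ℕ)
    (f : ℝ → ℝ) (hf : ContinuousOn f (Set.Icc (0:ℝ) 1)) :
    Bop n α β (fun t => t ^ i * (1 - t) ^ j * f t) x =
      (ascPochhammer ℝ i).eval (n * x + α + 1) *
        (ascPochhammer ℝ j).eval (n * (1 - x) + β + 1) /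
          (ascPochhammer ℝ (i + j)).eval (n + α + β + 2) *
        Bop n (α + i) (β + j) f x := by
  obtain ⟨hx0, hx1⟩ := hx
  set a : ℝ := n * x + α + 1 with ha_def
  set b : ℝ := n * (1 - x) + β + 1 with hb_def
  have hnx : (0:ℝ) ≤ n * x := by positivity
  have hn1x : (0:ℝ) ≤ n * (1 - x) := by
    have : (0:ℝ) ≤ 1 - x := by linarith
    positivity
  have ha : 0 < a := by rw [ha_def]; linarith
  have hb : 0 < b := by rw [hb_def]; linarith
  have hN : (∫ t in (0:ℝ)..1, t ^ (n * x + α) * (1 - t) ^ (n - n * x + β) *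
        (t ^ i * (1 - t) ^ j * f t)) =
      ∫ t in (0:ℝ)..1, t ^ (n * x + (α + i)) * (1 - t) ^ (n - n * x + (β + j)) * f t := by
    refine intervalIntegral.integral_congr_ae ?_
    filter_upwards [compl_mem_ae_iff.mpr (measure_singleton (1:ℝ))] with t ht hmem
    rw [Set.uIoc_of_le (by norm_num : (0:ℝ) ≤ 1)] at hmem
    have ht0 : 0 < t := hmem.1
    have ht1 : 0 < 1 - t := by
      have h' : t ≠ 1 := ht
      cases lt_or_eq_of_le hmem.2 with
      | inl h => linarith
      | inr h => exact absurd h h'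
    rw [show (n:ℝ) * x + (α + i) = (n * x + α) + (i:ℝ) by ring,
      show (n:ℝ) - n * x + (β + j) = (n - n * x + β) + (j:ℝ) by ring,
      Real.rpow_add ht0 (n * x + α) (i:ℝ), Real.rpow_add ht1 (n - n * x + β) (j:ℝ),
      Real.rpow_natCast, Real.rpow_natCast]
    ring
  have hD1 : (∫ t in (0:ℝ)..1, t ^ (n * x + α) * (1 - t) ^ (n - n * x + β)) =
      Real.Gamma a * Real.Gamma b / Real.Gamma (a + b) := by
    rw [show (n:ℝ) * x + α = a - 1 by rw [ha_def]; ring,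
      show (n:ℝ) - n * x + β = b - 1 by rw [hb_def]; ring]
    exact betaR ha hb
  have hD2 : (∫ t in (0:ℝ)..1, t ^ (n * x + (α + i)) * (1 - t) ^ (n - n * x + (β + j))) =
      Real.Gamma (a + i) * Real.Gamma (b + j) / Real.Gamma ((a + i) + (b + j)) := by
    rw [show (n:ℝ) * x + (α + i) = (a + i) - 1 by rw [ha_def]; ring,
      show (n:ℝ) - n * x + (β + j) = (b + j) - 1 by rw [hb_def]; ring]
    exact betaR (by positivity) (by positivity)
  have hGa := Real.Gamma_pos_of_pos ha
  have hGb := Real.Gamma_pos_of_pos hb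
  have hab : (0:ℝ) < a + b := by linarith
  have hGab := Real.Gamma_pos_of_pos hab
  have hPab := ascPos hab (i + j)
  have hPa := ascPos ha i
  have hPb := ascPos hb j
  rw [Bop, Bop, hN, hD1, hD2,
    show a + (i:ℝ) + (b + (j:ℝ)) = (a + b) + ((i + j : ℕ) : ℝ) by push_cast; ring,
    gammaAsc ha i, gammaAsc hb j, gammaAsc hab (i + j),
    show (n:ℝ) + α + β + 2 = a + b by rw [ha_def, hb_def]; ring]
  field_simp
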